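/- Let M be a monoid, let A be a right M-act disjoint from M, and let N = 𝒰(M,A). If the diagonal N-act is finitely presented, then both the diagonal M-act and the M-act A are finitely presented. -/

import Mathlib

/-- The axioms for a right action of a monoid `M` on a set `A`:
`act a 1 = a` and `act a (m * n) = act (act a m) n`. -/
def IsAct {M A : Type*} [Monoid M] (act : A → M → A) : Prop :=
  (∀ a, act a 1 = a) ∧ ∀ a m n, act a (m * n) = act (act a m) n

/-- `U ⊆ A` is a generating set for the act `(A, act)`: every element of `A`
has the form `u m` with `u ∈ U`, `m ∈ M`. -/
def Generates {M A : Type*} (act : A → M → A) (U : Set A) : Prop :=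
  ∀ a : A, ∃ u ∈ U, ∃ m : M, act u m = a

/-- An act is finitely generated if it has a finite generating set. -/
def ActFG {M A : Type*} (act : A → M → A) : Prop :=
  ∃ U : Set A, U.Finite ∧ Generates act U

/-- The free `M`-act on a set `X`: the set `X × M` with action `(x, m) n = (x, m n)`. -/
def FreeAct (M : Type*) [Monoid M] (X : Type*) : X × M → M → X × M :=
  fun p m => (p.1, p.2 * m)

/-- The congruence on the act `(A, act)` generated by a set `R ⊆ A × A`:
the smallest equivalence relation containing `R` that is compatible with the action. -/
def CongGen {M A : Type*} (act : A → M → A) (R : Set (A × A)) (a b : A) : Prop :=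
  ∀ r : A → A → Prop, Equivalence r →
    (∀ x y (m : M), r x y → r (act x m) (act y m)) →
    (∀ p ∈ R, r p.1 p.2) → r a b

/-- An `M`-act `(A, act)` is finitely presented if it is defined by a presentation
`⟨X | R⟩` with `X` and `R` finite, i.e. there is a surjective `M`-equivariant map
`π : F_X → A` whose kernel is the congruence on `F_X` generated by `R`. -/
def ActFP (M : Type*) [Monoid M] {A : Type*} (act : A → M → A) : Prop :=
  ∃ (X : Type) (_ : Finite X) (R : Set ((X × M) × (X × M))), R.Finite ∧
    ∃ π : X × M → A, Function.Surjective π ∧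
      (∀ p m, π (FreeAct M X p m) = act (π p) m) ∧
      ∀ w₁ w₂ : X × M, π w₁ = π w₂ ↔ CongGen (FreeAct M X) R w₁ w₂

/-- The diagonal `M`-act: `M × M` with action `(a, b) c = (a c, b c)`. -/
def DiagAct (M : Type*) [Monoid M] : M × M → M → M × M :=
  fun p c => (p.1 * c, p.2 * c)

/-- The multiplication of the monoid `𝒰(M, A)` on `M ⊕ A` (the disjoint union of `M`
and `A`): `x ∘ y = x y` for `x, y ∈ M`; `x ∘ y = x · y` for `x ∈ A`, `y ∈ M`;
`x ∘ y = y` for `y ∈ A`. -/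
def umul {M A : Type*} [Monoid M] (act : A → M → A) : M ⊕ A → M ⊕ A → M ⊕ A
  | Sum.inl x, Sum.inl y => Sum.inl (x * y)
  | Sum.inr a, Sum.inl y => Sum.inr (act a y)
  | Sum.inl _, Sum.inr b => Sum.inr b
  | Sum.inr _, Sum.inr b => Sum.inr b

/-- Associativity of `umul`. -/
theorem umul_assoc {M A : Type*} [Monoid M] (act : A → M → A) (hact : IsAct act) :
    ∀ x y z : M ⊕ A, umul act (umul act x y) z = umul act x (umul act y z) := by
  rintro (x | a) (y | b) (z | c) <;> simp [umul, mul_assoc, hact.2]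

/-- The monoid `𝒰(M, A)` on the disjoint union `M ⊕ A`, with identity `1_M`;
`M` is a submonoid and `A` is an ideal of it. -/
def UMonoid {M A : Type*} [Monoid M] (act : A → M → A) (hact : IsAct act) :
    Monoid (M ⊕ A) where
  mul := umul act
  one := Sum.inl 1
  mul_assoc := umul_assoc act hact
  one_mul := by
    rintro (x | a) <;> (show umul act (Sum.inl 1) _ = _) <;> simp [umul]
  mul_one := by
    rintro (x | a) <;> (show umul act _ (Sum.inl 1) = _) <;> simp [umul, hact.1]

section AuxCongGen
variable {M A : Type*} [Monoid M] {act : A → M → A} {R : Set (A × A)}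

theorem congGen_refl (a : A) : CongGen act R a a :=
  fun _ hr _ _ => hr.refl a

theorem congGen_symm {a b : A} (h : CongGen act R a b) : CongGen act R b a :=
  fun r hr hc hb => hr.symm (h r hr hc hb)

theorem congGen_trans {a b c : A} (h1 : CongGen act R a b) (h2 : CongGen act R b c) :
    CongGen act R a c :=
  fun r hr hc hb => hr.trans (h1 r hr hc hb) (h2 r hr hc hb)

theorem congGen_act {a b : A} (m : M) (h : CongGen act R a b) :
    CongGen act R (act a m) (act b m) :=
  fun r hr hc hb => hc _ _ m (h r hr hc hb)

theorem congGen_base {p : A × A} (hp : p ∈ R) : CongGen act R p.1 p.2 :=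
  fun _ _ _ hb => hb p hp

theorem congGen_mono {R' : Set (A × A)} (hsub : R ⊆ R') {a b : A}
    (h : CongGen act R a b) : CongGen act R' a b :=
  fun r hr hc hb => h r hr hc fun p hp => hb p (hsub hp)

end AuxCongGen

theorem actFP_of_data {M A : Type*} [Monoid M] (act : A → M → A)
    {Y : Type*} [Finite Y] (R : Set ((Y × M) × (Y × M))) (hRfin : R.Finite)
    (π : Y × M → A) (hsurj : Function.Surjective π)
    (hequiv : ∀ p m, π (FreeAct M Y p m) = act (π p) m)
    (hker : ∀ w₁ w₂, π w₁ = π w₂ ↔ CongGen (FreeAct M Y) R w₁ w₂) :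
    ActFP M act := by
  obtain ⟨n, ⟨e⟩⟩ := Finite.exists_equiv_fin Y
  set g : Y × M → Fin n × M := fun p => (e p.1, p.2) with hg
  set g' : Fin n × M → Y × M := fun p => (e.symm p.1, p.2) with hg'
  have hgg' : ∀ p, g (g' p) = p := by intro p; simp [hg, hg']
  have hg'g : ∀ p, g' (g p) = p := by intro p; simp [hg, hg']
  refine ⟨Fin n, inferInstance, (fun pr => (g pr.1, g pr.2)) '' R,
      hRfin.image _, π ∘ g', ?_, ?_, ?_⟩
  · intro a
    obtain ⟨w, hw⟩ := hsurj a
    exact ⟨g w, by simp only [Function.comp_apply, hg'g]; exact hw⟩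
  · intro p m
    exact hequiv (g' p) m
  · intro w₁ w₂
    have key : ∀ a b, CongGen (FreeAct M Y) R a b →
        CongGen (FreeAct M (Fin n)) ((fun pr => (g pr.1, g pr.2)) '' R) (g a) (g b) := by
      intro a b h
      refine h (fun a b => CongGen (FreeAct M (Fin n)) _ (g a) (g b))
        ⟨fun _ => congGen_refl _, fun h => congGen_symm h, fun h1 h2 => congGen_trans h1 h2⟩
        ?_ ?_
      · intro x y m hxy
        have hx : g (FreeAct M Y x m) = FreeAct M (Fin n) (g x) m := rfl
        have hy : g (FreeAct M Y y m) = FreeAct M (Fin n) (g y) m := rfl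
        rw [hx, hy]
        exact congGen_act m hxy
      · intro p hp
        exact congGen_base (p := (g p.1, g p.2)) ⟨p, hp, rfl⟩
    have key' : ∀ a b, CongGen (FreeAct M (Fin n)) ((fun pr => (g pr.1, g pr.2)) '' R) a b →
        CongGen (FreeAct M Y) R (g' a) (g' b) := by
      intro a b h
      refine h (fun a b => CongGen (FreeAct M Y) R (g' a) (g' b))
        ⟨fun _ => congGen_refl _, fun h => congGen_symm h, fun h1 h2 => congGen_trans h1 h2⟩
        ?_ ?_
      · intro x y m hxy
        have hx : g' (FreeAct M (Fin n) x m) = FreeAct M Y (g' x) m := rfl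
        have hy : g' (FreeAct M (Fin n) y m) = FreeAct M Y (g' y) m := rfl
        rw [hx, hy]
        exact congGen_act m hxy
      · rintro p ⟨pr, hpr, rfl⟩
        show CongGen _ _ (g' (g pr.1)) (g' (g pr.2))
        rw [hg'g, hg'g]
        exact congGen_base hpr
    constructor
    · intro hπ
      have h1 := (hker (g' w₁) (g' w₂)).mp hπ
      have h2 := key _ _ h1
      rwa [hgg', hgg'] at h2
    · intro hc
      exact (hker (g' w₁) (g' w₂)).mpr (key' _ _ hc)

/-- Transfer of congruence-generation along a "clean sector". -/
theorem clean_transfer {M : Type*} [Monoid M] {N' : Type*} [Monoid N'] {B : Type*}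
    (ι : M → N')
    (hι_mul : ∀ c t : M, ι c * ι t = ι (c * t))
    (hιinj : Function.Injective ι)
    (hfact : ∀ (ν n : N') (c : M), ν * n = ι c → ∃ c₀ t, ν = ι c₀ ∧ n = ι t)
    {X : Type*} (R : Set ((X × N') × (X × N'))) (π : X × N' → B)
    (hcongr : ∀ (w w' : X × N') (n : N'), π w = π w' →
        π (FreeAct N' X w n) = π (FreeAct N' X w' n))
    (hRπ : ∀ pr ∈ R, π pr.1 = π pr.2)
    {Y : Type*} (emb : Y → X) (hembinj : Function.Injective emb)
    (R' : Set ((Y × M) × (Y × M)))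
    (hR'mem : ∀ pr ∈ R, ∀ (ξ : Y) (c : M), pr.1 = (emb ξ, ι c) →
        ∀ (ξ' : Y) (c' : M), pr.2 = (emb ξ', ι c') → ((ξ, c), (ξ', c')) ∈ R')
    (hsector : ∀ w w' : X × N', π w = π w' → ∀ (ξ : Y) (c : M), w = (emb ξ, ι c) →
        ∃ (ξ' : Y) (c' : M), w' = (emb ξ', ι c')) :
    ∀ w w', CongGen (FreeAct N' X) R w w' →
      π w = π w' ∧ (∀ (ξ : Y) (c : M), w = (emb ξ, ι c) →
        ∀ (ξ' : Y) (c' : M), w' = (emb ξ', ι c') →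
          CongGen (FreeAct M Y) R' (ξ, c) (ξ', c')) := by
  intro w w' h
  refine h (fun w w' => π w = π w' ∧ ∀ ξ c, w = (emb ξ, ι c) → ∀ ξ' c', w' = (emb ξ', ι c') →
      CongGen (FreeAct M Y) R' (ξ, c) (ξ', c')) ⟨?_, ?_, ?_⟩ ?_ ?_
  · -- refl
    intro w
    refine ⟨rfl, ?_⟩
    intro ξ c h1 ξ' c' h2
    rw [h1] at h2
    have h3 : emb ξ = emb ξ' := congrArg Prod.fst h2
    have h4 : ι c = ι c' := congrArg Prod.snd h2
    cases hembinj h3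
    cases hιinj h4
    exact congGen_refl _
  · -- symm
    rintro w w' ⟨hπ, hcl⟩
    refine ⟨hπ.symm, ?_⟩
    intro ξ c h1 ξ' c' h2
    exact congGen_symm (hcl ξ' c' h2 ξ c h1)
  · -- trans
    rintro w₁ w₂ w₃ ⟨hπ12, h12⟩ ⟨hπ23, h23⟩
    refine ⟨hπ12.trans hπ23, ?_⟩
    intro ξ c h1 ξ' c' h3
    obtain ⟨ξ₂, c₂, h2⟩ := hsector w₁ w₂ hπ12 ξ c h1
    exact congGen_trans (h12 ξ c h1 ξ₂ c₂ h2) (h23 ξ₂ c₂ h2 ξ' c' h3)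
  · -- compat
    rintro w w' n ⟨hπ, hcl⟩
    refine ⟨hcongr w w' n hπ, ?_⟩
    intro ξ c h1 ξ' c' h2
    have hx : w.1 = emb ξ := congrArg Prod.fst h1
    have hv : w.2 * n = ι c := congrArg Prod.snd h1
    obtain ⟨c₀, t, hν, hn⟩ := hfact w.2 n c hv
    have hx' : w'.1 = emb ξ' := congrArg Prod.fst h2
    have hv' : w'.2 * n = ι c' := congrArg Prod.snd h2
    obtain ⟨c₀', t', hν', hn'⟩ := hfact w'.2 n c' hv'
    have htt : t = t' := hιinj (hn.symm.trans hn')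
    cases htt
    have hc : c = c₀ * t := hιinj (by rw [← hv, hν, hn, hι_mul])
    have hc' : c' = c₀' * t := hιinj (by rw [← hv', hν', hn', hι_mul])
    have hw : w = (emb ξ, ι c₀) := by
      rw [← hx, ← hν]
    have hw' : w' = (emb ξ', ι c₀') := by
      rw [← hx', ← hν']
    have base := hcl ξ c₀ hw ξ' c₀' hw'
    have step := congGen_act (act := FreeAct M Y) t base
    have e1 : FreeAct M Y (ξ, c₀) t = (ξ, c₀ * t) := rfl
    have e2 : FreeAct M Y (ξ', c₀') t = (ξ', c₀' * t) := rfl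
    rw [e1, e2] at step
    rw [hc, hc']
    exact step
  · -- base
    intro p hp
    refine ⟨hRπ p hp, ?_⟩
    intro ξ c h1 ξ' c' h2
    exact congGen_base (hR'mem p hp ξ c h1 ξ' c' h2)

theorem part1 {M A : Type*} [Monoid M] {N' : Type*} [Monoid N'] (act : A → M → A)
    (ι : M → N') (κ : A → N')
    (hι_mul : ∀ c t : M, ι c * ι t = ι (c * t))
    (hκι : ∀ (b : A) (t : M), κ b * ι t = κ (act b t))
    (habs : ∀ (ν : N') (e : A), ν * κ e = κ e)
    (hιinj : Function.Injective ι)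
    (hdisj : ∀ (c : M) (e : A), ι c ≠ κ e)
    (hcover : ∀ ν : N', (∃ c, ν = ι c) ∨ ∃ e, ν = κ e)
    {X : Type} [Finite X] (R : Set ((X × N') × (X × N'))) (hRfin : R.Finite)
    (π : X × N' → N' × N') (hsurj : Function.Surjective π)
    (hequiv : ∀ p m, π (FreeAct N' X p m) = ((π p).1 * m, (π p).2 * m))
    (hker : ∀ w₁ w₂, π w₁ = π w₂ ↔ CongGen (FreeAct N' X) R w₁ w₂) :
    ActFP M (DiagAct M) := by
  classical
  have hfact : ∀ (ν n : N') (c : M), ν * n = ι c → ∃ c₀ t, ν = ι c₀ ∧ n = ι t := by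
    intro ν n c h
    rcases hcover n with ⟨t, rfl⟩ | ⟨e, rfl⟩
    · rcases hcover ν with ⟨c₀, rfl⟩ | ⟨b, rfl⟩
      · exact ⟨c₀, t, rfl, rfl⟩
      · rw [hκι] at h
        exact absurd h.symm (hdisj _ _)
    · rw [habs] at h
      exact absurd h.symm (hdisj _ _)
  have pi_form : ∀ (x : X) (ν : N'), π (x, ν) = ((π (x, 1)).1 * ν, (π (x, 1)).2 * ν) := by
    intro x ν
    have h := hequiv (x, (1 : N')) ν
    simpa [FreeAct, one_mul] using h
  have hcongr : ∀ (w w' : X × N') (n : N'), π w = π w' →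
      π (FreeAct N' X w n) = π (FreeAct N' X w' n) := by
    intro w w' n h
    rw [hequiv, hequiv, h]
  -- the clean sector: generators with both components of π(x,1) in ι(M)
  set Y₁ := {q : X × (M × M) // π (q.1, (1 : N')) = (ι q.2.1, ι q.2.2)} with hY₁
  have hembinj : Function.Injective (fun ξ : Y₁ => ξ.1.1) := by
    rintro ⟨⟨x, u, v⟩, hx⟩ ⟨⟨x', u', v'⟩, hx'⟩ h
    dsimp at h
    subst h
    have h4 := hx.symm.trans hx'
    rw [Prod.mk.injEq] at h4
    obtain ⟨h5, h6⟩ := h4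
    cases hιinj h5
    cases hιinj h6
    rfl
  haveI : Finite Y₁ := by
    have hset : {q : X × (M × M) | π (q.1, (1 : N')) = (ι q.2.1, ι q.2.2)}.Finite := by
      apply Set.Finite.of_finite_image (f := fun q : X × (M × M) => q.1) (Set.toFinite _)
      rintro ⟨x, u, v⟩ h1 ⟨x', u', v'⟩ h2 h3
      simp only [Set.mem_setOf_eq] at h1 h2
      dsimp at h3
      subst h3
      have h4 := h1.symm.trans h2
      rw [Prod.mk.injEq] at h4
      obtain ⟨h5, h6⟩ := h4
      rw [Prod.mk.injEq]
      exact ⟨rfl, by rw [hιinj h5, hιinj h6]⟩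
    exact hset.to_subtype
  have lift : ∀ (ξ : Y₁) (c : M), π (ξ.1.1, ι c) = (ι (ξ.1.2.1 * c), ι (ξ.1.2.2 * c)) := by
    intro ξ c
    rw [pi_form, ξ.2]
    simp [hι_mul]
  set R₁ : Set ((Y₁ × M) × (Y₁ × M)) :=
    {e | ((e.1.1.1.1, ι e.1.2), (e.2.1.1.1, ι e.2.2)) ∈ R} with hR₁
  have hR₁fin : R₁.Finite := by
    have heq : R₁ = (fun e : (Y₁ × M) × (Y₁ × M) =>
        ((e.1.1.1.1, ι e.1.2), (e.2.1.1.1, ι e.2.2))) ⁻¹' R := rfl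
    rw [heq]
    apply Set.Finite.preimage _ hRfin
    rintro ⟨⟨ξ1, c1⟩, ξ1', c1'⟩ - ⟨⟨ξ2, c2⟩, ξ2', c2'⟩ - h
    simp only [Prod.mk.injEq] at h
    obtain ⟨⟨ha, hb⟩, hc, hd⟩ := h
    rw [Prod.mk.injEq, Prod.mk.injEq, Prod.mk.injEq]
    exact ⟨⟨hembinj ha, hιinj hb⟩, hembinj hc, hιinj hd⟩
  -- hsector for the clean transfer
  have hsector : ∀ w w' : X × N', π w = π w' → ∀ (ξ : Y₁) (c : M),
      w = ((fun ξ : Y₁ => ξ.1.1) ξ, ι c) →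
      ∃ (ξ' : Y₁) (c' : M), w' = ((fun ξ : Y₁ => ξ.1.1) ξ', ι c') := by
    rintro w ⟨x', ν'⟩ hπeq ξ c rfl
    rw [lift] at hπeq
    rcases hcover ν' with ⟨c', rfl⟩ | ⟨e, rfl⟩
    · rw [pi_form] at hπeq
      rcases hcover (π (x', 1)).1 with ⟨u', hu'⟩ | ⟨b, hb⟩
      · rcases hcover (π (x', 1)).2 with ⟨v', hv'⟩ | ⟨b', hb'⟩
        · refine ⟨⟨(x', (u', v')), ?_⟩, c', rfl⟩
          rw [← hu', ← hv']
        · rw [Prod.mk.injEq] at hπeq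
          rw [hb', hκι] at hπeq
          exact absurd hπeq.2 (hdisj _ _)
      · rw [Prod.mk.injEq] at hπeq
        rw [hb, hκι] at hπeq
        exact absurd hπeq.1 (hdisj _ _)
    · rw [pi_form, habs] at hπeq
      rw [Prod.mk.injEq] at hπeq
      exact absurd hπeq.1 (hdisj _ _)
  have hRπ : ∀ pr ∈ R, π pr.1 = π pr.2 := fun pr hpr => (hker _ _).mpr (congGen_base hpr)
  have hR'mem : ∀ pr ∈ R, ∀ (ξ : Y₁) (c : M), pr.1 = ((fun ξ : Y₁ => ξ.1.1) ξ, ι c) →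
      ∀ (ξ' : Y₁) (c' : M), pr.2 = ((fun ξ : Y₁ => ξ.1.1) ξ', ι c') →
        ((ξ, c), (ξ', c')) ∈ R₁ := by
    intro pr hpr ξ c h1 ξ' c' h2
    show ((ξ.1.1, ι c), (ξ'.1.1, ι c')) ∈ R
    rw [← h1, ← h2]
    exact hpr
  -- apply the presentation-builder
  apply actFP_of_data (M := M) (DiagAct M) (Y := Y₁) R₁ hR₁fin
      (fun w => (w.1.1.2.1 * w.2, w.1.1.2.2 * w.2))
  · -- surjectivity
    rintro ⟨p, q⟩
    obtain ⟨⟨x, ν⟩, hw⟩ := hsurj (ι p, ι q)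
    rw [pi_form] at hw
    rcases hcover ν with ⟨t, rfl⟩ | ⟨e, rfl⟩
    · rcases hcover (π (x, 1)).1 with ⟨u, hu⟩ | ⟨b, hb⟩
      · rcases hcover (π (x, 1)).2 with ⟨v, hv⟩ | ⟨b', hb'⟩
        · refine ⟨(⟨(x, (u, v)), by rw [← hu, ← hv]⟩, t), ?_⟩
          rw [Prod.mk.injEq] at hw
          rw [hu, hι_mul] at hw
          rw [hv, hι_mul] at hw
          exact Prod.ext (hιinj hw.1) (hιinj hw.2)
        · exfalso
          rw [Prod.mk.injEq] at hw
          rw [hb', hκι] at hw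
          exact hdisj _ _ hw.2.symm
      · exfalso
        rw [Prod.mk.injEq] at hw
        rw [hb, hκι] at hw
        exact hdisj _ _ hw.1.symm
    · exfalso
      simp only [habs] at hw
      rw [Prod.mk.injEq] at hw
      exact hdisj _ _ hw.1.symm
  · -- equivariance
    intro p m
    show (p.1.1.2.1 * (p.2 * m), p.1.1.2.2 * (p.2 * m)) =
      ((p.1.1.2.1 * p.2) * m, (p.1.1.2.2 * p.2) * m)
    rw [mul_assoc, mul_assoc]
  · -- kernel
    rintro ⟨ξ, c⟩ ⟨ξ', c'⟩
    constructor
    · intro hπ₁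
      have h1 : ξ.1.2.1 * c = ξ'.1.2.1 * c' := congrArg Prod.fst hπ₁
      have h2 : ξ.1.2.2 * c = ξ'.1.2.2 * c' := congrArg Prod.snd hπ₁
      have hπ : π (ξ.1.1, ι c) = π (ξ'.1.1, ι c') := by
        rw [lift, lift, h1, h2]
      exact (clean_transfer ι hι_mul hιinj hfact R π hcongr hRπ
        (fun ξ : Y₁ => ξ.1.1) hembinj R₁ hR'mem hsector _ _ ((hker _ _).mp hπ)).2
        ξ c rfl ξ' c' rfl
    · intro hcg
      refine hcg (fun w₁ w₂ => (w₁.1.1.2.1 * w₁.2, w₁.1.1.2.2 * w₁.2) =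
          (w₂.1.1.2.1 * w₂.2, w₂.1.1.2.2 * w₂.2)) ⟨fun _ => rfl, Eq.symm, Eq.trans⟩ ?_ ?_
      · intro x y m h
        show (x.1.1.2.1 * (x.2 * m), x.1.1.2.2 * (x.2 * m)) =
          (y.1.1.2.1 * (y.2 * m), y.1.1.2.2 * (y.2 * m))
        rw [Prod.mk.injEq] at h ⊢
        rw [← mul_assoc, ← mul_assoc, ← mul_assoc, ← mul_assoc, h.1, h.2]
        exact ⟨rfl, rfl⟩
      · intro p hp
        have hp' : ((p.1.1.1.1, ι p.1.2), (p.2.1.1.1, ι p.2.2)) ∈ R := hp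
        have hπeq : π (p.1.1.1.1, ι p.1.2) = π (p.2.1.1.1, ι p.2.2) :=
          (hker _ _).mpr
            (congGen_base (p := ((p.1.1.1.1, ι p.1.2), (p.2.1.1.1, ι p.2.2))) hp')
        rw [lift, lift, Prod.mk.injEq] at hπeq
        exact Prod.ext (hιinj hπeq.1) (hιinj hπeq.2)

theorem part2 {M A : Type*} [Monoid M] {N' : Type*} [Monoid N'] (act : A → M → A)
    (hact2 : ∀ a (m n : M), act a (m * n) = act (act a m) n)
    (ι : M → N') (κ : A → N')
    (hι_mul : ∀ c t : M, ι c * ι t = ι (c * t))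
    (hκι : ∀ (b : A) (t : M), κ b * ι t = κ (act b t))
    (habs : ∀ (ν : N') (e : A), ν * κ e = κ e)
    (hιinj : Function.Injective ι)
    (hκinj : Function.Injective κ)
    (hdisj : ∀ (c : M) (e : A), ι c ≠ κ e)
    (hcover : ∀ ν : N', (∃ c, ν = ι c) ∨ ∃ e, ν = κ e)
    {X : Type} [Finite X] (R : Set ((X × N') × (X × N'))) (hRfin : R.Finite)
    (π : X × N' → N' × N') (hsurj : Function.Surjective π)
    (hequiv : ∀ p m, π (FreeAct N' X p m) = ((π p).1 * m, (π p).2 * m))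
    (hker : ∀ w₁ w₂, π w₁ = π w₂ ↔ CongGen (FreeAct N' X) R w₁ w₂) :
    ActFP M act := by
  classical
  have hfact : ∀ (ν n : N') (c : M), ν * n = ι c → ∃ c₀ t, ν = ι c₀ ∧ n = ι t := by
    intro ν n c h
    rcases hcover n with ⟨t, rfl⟩ | ⟨e, rfl⟩
    · rcases hcover ν with ⟨c₀, rfl⟩ | ⟨b, rfl⟩
      · exact ⟨c₀, t, rfl, rfl⟩
      · rw [hκι] at h
        exact absurd h.symm (hdisj _ _)
    · rw [habs] at h
      exact absurd h.symm (hdisj _ _)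
  have pi_form : ∀ (x : X) (ν : N'), π (x, ν) = ((π (x, 1)).1 * ν, (π (x, 1)).2 * ν) := by
    intro x ν
    have h := hequiv (x, (1 : N')) ν
    simpa [FreeAct, one_mul] using h
  have hcongr : ∀ (w w' : X × N') (n : N'), π w = π w' →
      π (FreeAct N' X w n) = π (FreeAct N' X w' n) := by
    intro w w' n h
    rw [hequiv, hequiv, h]
  -- the M×M sector (needed for the decoupling of scalars)
  set Y₁ := {q : X × (M × M) // π (q.1, (1 : N')) = (ι q.2.1, ι q.2.2)} with hY₁
  haveI : Finite Y₁ := by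
    have hset : {q : X × (M × M) | π (q.1, (1 : N')) = (ι q.2.1, ι q.2.2)}.Finite := by
      apply Set.Finite.of_finite_image (f := fun q : X × (M × M) => q.1) (Set.toFinite _)
      rintro ⟨x, u, v⟩ h1 ⟨x', u', v'⟩ h2 h3
      simp only [Set.mem_setOf_eq] at h1 h2
      dsimp at h3
      subst h3
      have h4 := h1.symm.trans h2
      rw [Prod.mk.injEq] at h4
      obtain ⟨h5, h6⟩ := h4
      rw [Prod.mk.injEq]
      exact ⟨rfl, by rw [hιinj h5, hιinj h6]⟩
    exact hset.to_subtype
  have covM : ∀ (v w : M), ∃ (l : Y₁) (d : M), l.1.2.1 * d = v ∧ l.1.2.2 * d = w := by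
    intro v w
    obtain ⟨⟨x, ν⟩, hw⟩ := hsurj (ι v, ι w)
    rw [pi_form] at hw
    rcases hcover ν with ⟨t, rfl⟩ | ⟨e, rfl⟩
    · rcases hcover (π (x, 1)).1 with ⟨u, hu⟩ | ⟨b, hb⟩
      · rcases hcover (π (x, 1)).2 with ⟨v', hv'⟩ | ⟨b', hb'⟩
        · refine ⟨⟨(x, (u, v')), by rw [← hu, ← hv']⟩, t, ?_, ?_⟩
          · rw [Prod.mk.injEq] at hw
            rw [hu, hι_mul] at hw
            exact hιinj hw.1
          · rw [Prod.mk.injEq] at hw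
            rw [hv', hι_mul] at hw
            exact hιinj hw.2
        · exfalso
          rw [Prod.mk.injEq] at hw
          rw [hb', hκι] at hw
          exact hdisj _ _ hw.2.symm
      · exfalso
        rw [Prod.mk.injEq] at hw
        rw [hb, hκι] at hw
        exact hdisj _ _ hw.1.symm
    · exfalso
      simp only [habs] at hw
      rw [Prod.mk.injEq] at hw
      exact hdisj _ _ hw.1.symm
  -- the A×M sector: generators for the act A
  set Y₂ := {q : X × (A × M) // π (q.1, (1 : N')) = (κ q.2.1, ι q.2.2)} with hY₂
  have hembinj : Function.Injective (fun ξ : Y₂ => ξ.1.1) := by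
    rintro ⟨⟨x, b, v⟩, hx⟩ ⟨⟨x', b', v'⟩, hx'⟩ h
    dsimp at h
    subst h
    have h4 := hx.symm.trans hx'
    rw [Prod.mk.injEq] at h4
    obtain ⟨h5, h6⟩ := h4
    cases hκinj h5
    cases hιinj h6
    rfl
  haveI : Finite Y₂ := by
    have hset : {q : X × (A × M) | π (q.1, (1 : N')) = (κ q.2.1, ι q.2.2)}.Finite := by
      apply Set.Finite.of_finite_image (f := fun q : X × (A × M) => q.1) (Set.toFinite _)
      rintro ⟨x, b, v⟩ h1 ⟨x', b', v'⟩ h2 h3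
      simp only [Set.mem_setOf_eq] at h1 h2
      dsimp at h3
      subst h3
      have h4 := h1.symm.trans h2
      rw [Prod.mk.injEq] at h4
      obtain ⟨h5, h6⟩ := h4
      rw [Prod.mk.injEq]
      exact ⟨rfl, by rw [hκinj h5, hιinj h6]⟩
    exact hset.to_subtype
  have lift₂ : ∀ (ξ : Y₂) (c : M),
      π (ξ.1.1, ι c) = (κ (act ξ.1.2.1 c), ι (ξ.1.2.2 * c)) := by
    intro ξ c
    rw [pi_form, ξ.2]
    rw [hκι, hι_mul]
  have cov2 : ∀ (a : A) (k : M), ∃ (z : Y₂) (t : M),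
      act z.1.2.1 t = a ∧ z.1.2.2 * t = k := by
    intro a k
    obtain ⟨⟨x, ν⟩, hw⟩ := hsurj (κ a, ι k)
    rw [pi_form] at hw
    rcases hcover ν with ⟨t, rfl⟩ | ⟨e, rfl⟩
    · rcases hcover (π (x, 1)).1 with ⟨u, hu⟩ | ⟨b, hb⟩
      · exfalso
        rw [Prod.mk.injEq] at hw
        rw [hu, hι_mul] at hw
        exact hdisj _ _ hw.1
      · rcases hcover (π (x, 1)).2 with ⟨v, hv⟩ | ⟨b', hb'⟩
        · refine ⟨⟨(x, (b, v)), by rw [← hb, ← hv]⟩, t, ?_, ?_⟩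
          · rw [Prod.mk.injEq] at hw
            rw [hb, hκι] at hw
            exact hκinj hw.1
          · rw [Prod.mk.injEq] at hw
            rw [hv, hι_mul] at hw
            exact hιinj hw.2
        · exfalso
          rw [Prod.mk.injEq] at hw
          rw [hb', hκι] at hw
          exact hdisj _ _ hw.2.symm
    · exfalso
      simp only [habs] at hw
      rw [Prod.mk.injEq] at hw
      exact hdisj _ _ hw.2.symm
  -- normalized representatives
  choose nrz nrt hnr1 hnr2 using fun a : A => cov2 a 1
  -- finite scalar set for the seeds
  set Dstar : Set A := Set.range (fun p : Y₂ × Y₂ => act p.1.1.2.1 p.2.1.2.2) with hDstar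
  set MUset : Set M :=
    Set.range (fun l : Y₁ => l.1.2.1) ∪ Set.range (fun l : Y₁ => l.1.2.2) with hMUset
  set W₀ : Set M :=
    Set.range (fun ξ : Y₂ => ξ.1.2.2) ∪
      Set.image2 (fun (δ : A) (u : M) => nrt δ * u) Dstar MUset with hW₀
  have hW₀fin : W₀.Finite :=
    (Set.finite_range _).union
      ((Set.finite_range _).image2 _ ((Set.finite_range _).union (Set.finite_range _)))
  set Seeds : Set ((Y₂ × M) × (Y₂ × M)) :=
    (fun p : Y₂ × M =>
      ((p.1, p.2), (nrz (act p.1.1.2.1 p.2), nrt (act p.1.1.2.1 p.2)))) ''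
      (Set.univ ×ˢ W₀) with hSeeds
  set R₂ : Set ((Y₂ × M) × (Y₂ × M)) :=
    {e | ((e.1.1.1.1, ι e.1.2), (e.2.1.1.1, ι e.2.2)) ∈ R} with hR₂
  set RA : Set ((Y₂ × M) × (Y₂ × M)) := R₂ ∪ Seeds with hRA
  have hR₂fin : R₂.Finite := by
    have heq : R₂ = (fun e : (Y₂ × M) × (Y₂ × M) =>
        ((e.1.1.1.1, ι e.1.2), (e.2.1.1.1, ι e.2.2))) ⁻¹' R := rfl
    rw [heq]
    apply Set.Finite.preimage _ hRfin
    rintro ⟨⟨ξ1, c1⟩, ξ1', c1'⟩ - ⟨⟨ξ2, c2⟩, ξ2', c2'⟩ - h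
    simp only [Prod.mk.injEq] at h
    obtain ⟨⟨ha, hb⟩, hc, hd⟩ := h
    rw [Prod.mk.injEq, Prod.mk.injEq, Prod.mk.injEq]
    exact ⟨⟨hembinj ha, hιinj hb⟩, hembinj hc, hιinj hd⟩
  have hSeedsfin : Seeds.Finite := (Set.finite_univ.prod hW₀fin).image _
  have hRAfin : RA.Finite := hR₂fin.union hSeedsfin
  -- basic kernel facts
  have hRπ : ∀ pr ∈ R, π pr.1 = π pr.2 := fun pr hpr => (hker _ _).mpr (congGen_base hpr)
  have hR'mem : ∀ pr ∈ R, ∀ (ξ : Y₂) (c : M), pr.1 = ((fun ξ : Y₂ => ξ.1.1) ξ, ι c) →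
      ∀ (ξ' : Y₂) (c' : M), pr.2 = ((fun ξ : Y₂ => ξ.1.1) ξ', ι c') →
        ((ξ, c), (ξ', c')) ∈ RA := by
    intro pr hpr ξ c h1 ξ' c' h2
    refine Set.mem_union_left _ ?_
    show ((ξ.1.1, ι c), (ξ'.1.1, ι c')) ∈ R
    rw [← h1, ← h2]
    exact hpr
  have hsector : ∀ w w' : X × N', π w = π w' → ∀ (ξ : Y₂) (c : M),
      w = ((fun ξ : Y₂ => ξ.1.1) ξ, ι c) →
      ∃ (ξ' : Y₂) (c' : M), w' = ((fun ξ : Y₂ => ξ.1.1) ξ', ι c') := by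
    rintro w ⟨x', ν'⟩ hπeq ξ c rfl
    rw [lift₂] at hπeq
    rcases hcover ν' with ⟨c', rfl⟩ | ⟨e, rfl⟩
    · rw [pi_form] at hπeq
      rcases hcover (π (x', 1)).1 with ⟨u', hu'⟩ | ⟨b, hb⟩
      · exfalso
        rw [Prod.mk.injEq] at hπeq
        rw [hu', hι_mul] at hπeq
        exact hdisj _ _ hπeq.1.symm
      · rcases hcover (π (x', 1)).2 with ⟨v', hv'⟩ | ⟨b', hb'⟩
        · refine ⟨⟨(x', (b, v')), ?_⟩, c', rfl⟩
          rw [← hb, ← hv']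
        · exfalso
          rw [Prod.mk.injEq] at hπeq
          rw [hb', hκι] at hπeq
          exact hdisj _ _ hπeq.2
    · exfalso
      rw [pi_form] at hπeq
      simp only [habs] at hπeq
      rw [Prod.mk.injEq] at hπeq
      exact hdisj _ _ hπeq.2
  have clean : ∀ (ζ ζ' : Y₂) (d d' : M), π (ζ.1.1, ι d) = π (ζ'.1.1, ι d') →
      CongGen (FreeAct M Y₂) RA (ζ, d) (ζ', d') := by
    intro ζ ζ' d d' hπ
    exact (clean_transfer ι hι_mul hιinj hfact R π hcongr hRπ
      (fun ξ : Y₂ => ξ.1.1) hembinj RA hR'mem hsector _ _ ((hker _ _).mp hπ)).2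
      ζ d rfl ζ' d' rfl
  have seedstep : ∀ (z : Y₂) (w₀ : M), w₀ ∈ W₀ → ∀ t : M,
      CongGen (FreeAct M Y₂) RA (z, w₀ * t)
        (nrz (act z.1.2.1 w₀), nrt (act z.1.2.1 w₀) * t) := by
    intro z w₀ hw t
    have hbase : ((z, w₀), (nrz (act z.1.2.1 w₀), nrt (act z.1.2.1 w₀))) ∈ RA :=
      Set.mem_union_right _ ⟨(z, w₀), ⟨Set.mem_univ _, hw⟩, rfl⟩
    exact congGen_act (act := FreeAct M Y₂) t
      (congGen_base (p := ((z, w₀), (nrz (act z.1.2.1 w₀), nrt (act z.1.2.1 w₀)))) hbase)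
  apply actFP_of_data (M := M) act (Y := Y₂) RA hRAfin (fun w => act w.1.1.2.1 w.2)
  · -- surjectivity
    intro a
    exact ⟨(nrz a, nrt a), hnr1 a⟩
  · -- equivariance
    intro p m
    show act p.1.1.2.1 (p.2 * m) = act (act p.1.1.2.1 p.2) m
    exact hact2 _ _ _
  · -- kernel
    rintro ⟨ξ, c⟩ ⟨ξ', c'⟩
    constructor
    · intro hφ
      obtain ⟨rr, w, hrw1, hrw2⟩ := cov2 (act ξ.1.2.1 c) c'
      obtain ⟨qq, v, hqv1, hqv2⟩ := cov2 (act ξ.1.2.1 c) c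
      obtain ⟨l, d, hld1, hld2⟩ := covM v w
      have hqvW : qq.1.2.2 ∈ W₀ := Set.mem_union_left _ ⟨qq, rfl⟩
      have step3 := seedstep ξ qq.1.2.2 hqvW v
      rw [hqv2] at step3
      have hrwW : rr.1.2.2 ∈ W₀ := Set.mem_union_left _ ⟨rr, rfl⟩
      have step2 := seedstep ξ' rr.1.2.2 hrwW w
      rw [hrw2] at step2
      have hδD : act ξ.1.2.1 qq.1.2.2 ∈ Dstar := ⟨(ξ, qq), rfl⟩
      have hlMU1 : l.1.2.1 ∈ MUset := Set.mem_union_left _ ⟨l, rfl⟩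
      have h5W : nrt (act ξ.1.2.1 qq.1.2.2) * l.1.2.1 ∈ W₀ :=
        Set.mem_union_right _ (Set.mem_image2_of_mem hδD hlMU1)
      have step5 := seedstep (nrz (act ξ.1.2.1 qq.1.2.2))
        (nrt (act ξ.1.2.1 qq.1.2.2) * l.1.2.1) h5W d
      rw [mul_assoc, hld1] at step5
      have hγD : act ξ'.1.2.1 rr.1.2.2 ∈ Dstar := ⟨(ξ', rr), rfl⟩
      have hlMU2 : l.1.2.2 ∈ MUset := Set.mem_union_right _ ⟨l, rfl⟩
      have h6W : nrt (act ξ'.1.2.1 rr.1.2.2) * l.1.2.2 ∈ W₀ :=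
        Set.mem_union_right _ (Set.mem_image2_of_mem hγD hlMU2)
      have step6 := seedstep (nrz (act ξ'.1.2.1 rr.1.2.2))
        (nrt (act ξ'.1.2.1 rr.1.2.2) * l.1.2.2) h6W d
      rw [mul_assoc, hld2] at step6
      have hπ7 : π ((nrz (act (nrz (act ξ.1.2.1 qq.1.2.2)).1.2.1
            (nrt (act ξ.1.2.1 qq.1.2.2) * l.1.2.1))).1.1,
          ι (nrt (act (nrz (act ξ.1.2.1 qq.1.2.2)).1.2.1
            (nrt (act ξ.1.2.1 qq.1.2.2) * l.1.2.1)) * d)) =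
          π ((nrz (act (nrz (act ξ'.1.2.1 rr.1.2.2)).1.2.1
            (nrt (act ξ'.1.2.1 rr.1.2.2) * l.1.2.2))).1.1,
          ι (nrt (act (nrz (act ξ'.1.2.1 rr.1.2.2)).1.2.1
            (nrt (act ξ'.1.2.1 rr.1.2.2) * l.1.2.2)) * d)) := by
        rw [lift₂, lift₂]
        have e1 : act (nrz (act (nrz (act ξ.1.2.1 qq.1.2.2)).1.2.1
            (nrt (act ξ.1.2.1 qq.1.2.2) * l.1.2.1))).1.2.1
            (nrt (act (nrz (act ξ.1.2.1 qq.1.2.2)).1.2.1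
              (nrt (act ξ.1.2.1 qq.1.2.2) * l.1.2.1)) * d) = act ξ.1.2.1 c := by
          rw [hact2, hnr1, ← hact2, mul_assoc, hld1, hact2, hnr1, ← hact2, hqv2]
        have e2 : (nrz (act (nrz (act ξ.1.2.1 qq.1.2.2)).1.2.1
            (nrt (act ξ.1.2.1 qq.1.2.2) * l.1.2.1))).1.2.2 *
            (nrt (act (nrz (act ξ.1.2.1 qq.1.2.2)).1.2.1
              (nrt (act ξ.1.2.1 qq.1.2.2) * l.1.2.1)) * d) = d := by
          rw [← mul_assoc, hnr2, one_mul]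
        have e1' : act (nrz (act (nrz (act ξ'.1.2.1 rr.1.2.2)).1.2.1
            (nrt (act ξ'.1.2.1 rr.1.2.2) * l.1.2.2))).1.2.1
            (nrt (act (nrz (act ξ'.1.2.1 rr.1.2.2)).1.2.1
              (nrt (act ξ'.1.2.1 rr.1.2.2) * l.1.2.2)) * d) = act ξ.1.2.1 c := by
          rw [hact2, hnr1, ← hact2, mul_assoc, hld2, hact2, hnr1, ← hact2, hrw2]
          exact hφ.symm
        have e2' : (nrz (act (nrz (act ξ'.1.2.1 rr.1.2.2)).1.2.1
            (nrt (act ξ'.1.2.1 rr.1.2.2) * l.1.2.2))).1.2.2 *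
            (nrt (act (nrz (act ξ'.1.2.1 rr.1.2.2)).1.2.1
              (nrt (act ξ'.1.2.1 rr.1.2.2) * l.1.2.2)) * d) = d := by
          rw [← mul_assoc, hnr2, one_mul]
        rw [e1, e2, e1', e2']
      have step7 := clean _ _ _ _ hπ7
      exact congGen_trans step3 (congGen_trans step5 (congGen_trans step7
        (congGen_trans (congGen_symm step6) (congGen_symm step2))))
    · intro hcg
      refine hcg (fun w₁ w₂ => act w₁.1.1.2.1 w₁.2 = act w₂.1.1.2.1 w₂.2)
        ⟨fun _ => rfl, Eq.symm, Eq.trans⟩ ?_ ?_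
      · intro x y m h
        show act x.1.1.2.1 (x.2 * m) = act y.1.1.2.1 (y.2 * m)
        rw [hact2, hact2, h]
      · rintro p (hp | hp)
        · have hp2 : ((p.1.1.1.1, ι p.1.2), (p.2.1.1.1, ι p.2.2)) ∈ R := hp
          have hπeq : π (p.1.1.1.1, ι p.1.2) = π (p.2.1.1.1, ι p.2.2) :=
            (hker _ _).mpr
              (congGen_base (p := ((p.1.1.1.1, ι p.1.2), (p.2.1.1.1, ι p.2.2))) hp2)
          rw [lift₂, lift₂, Prod.mk.injEq] at hπeq
          exact hκinj hπeq.1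
        · obtain ⟨⟨z, w₀⟩, -, rfl⟩ := hp
          show act z.1.2.1 w₀ = act (nrz (act z.1.2.1 w₀)).1.2.1 (nrt (act z.1.2.1 w₀))
          exact (hnr1 _).symm

/-- For `N = 𝒰(M, A)`: if the diagonal `N`-act is finitely presented, then both the
diagonal `M`-act and the `M`-act `A` are finitely presented. -/
theorem stmt8 {M A : Type*} [Monoid M] [Nonempty A] (act : A → M → A)
    (hact : IsAct act) :
    @ActFP (M ⊕ A) (UMonoid act hact) ((M ⊕ A) × (M ⊕ A))
        (fun p c => (umul act p.1 c, umul act p.2 c)) →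
      ActFP M (DiagAct M) ∧ ActFP M act := by

  intro h
  letI : Monoid (M ⊕ A) := UMonoid act hact
  obtain ⟨X, hXfin, R, hRfin, π, hsurj, hequiv, hker⟩ := h
  haveI := hXfin
  have hι_mul : ∀ c t : M, (Sum.inl c : M ⊕ A) * Sum.inl t = Sum.inl (c * t) :=
    fun _ _ => rfl
  have hκι : ∀ (b : A) (t : M), (Sum.inr b : M ⊕ A) * Sum.inl t = Sum.inr (act b t) :=
    fun _ _ => rfl
  have habs : ∀ (ν : M ⊕ A) (e : A), ν * Sum.inr e = Sum.inr e := by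
    rintro (c | b) e <;> rfl
  have hcover : ∀ ν : M ⊕ A, (∃ c, ν = Sum.inl c) ∨ ∃ e, ν = Sum.inr e := by
    rintro (c | e)
    · exact Or.inl ⟨c, rfl⟩
    · exact Or.inr ⟨e, rfl⟩
  have hdisj : ∀ (c : M) (e : A), (Sum.inl c : M ⊕ A) ≠ Sum.inr e :=
    fun c e h => by cases h
  have hequiv' : ∀ (p : X × (M ⊕ A)) (m : M ⊕ A),
      π (FreeAct (M ⊕ A) X p m) = ((π p).1 * m, (π p).2 * m) := hequiv
  constructor
  · exact part1 act Sum.inl Sum.inr hι_mul hκι habs Sum.inl_injective hdisj hcover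
      R hRfin π hsurj hequiv' hker
  · exact part2 act hact.2 Sum.inl Sum.inr hι_mul hκι habs Sum.inl_injective
      Sum.inr_injective hdisj hcover R hRfin π hsurj hequiv' hker
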